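/- Let X be a set and let σ, φ : X → X be bijections with σ∘φ = φ∘σ. Suppose that φ^i(x) ≠ x for every x ∈ X and every integer i ≥ 1, and that the number of σ-orbits of X is finite. Then the number of φ-orbits of X is finite. -/

import Mathlib

section FiniteOrbitsAux

variable {X : Type*}

lemma mem_orbit_zpowers_iff' (σ : Equiv.Perm X) (x y : X) :
    x ∈ MulAction.orbit (Subgroup.zpowers σ) y ↔ ∃ n : ℤ, (σ ^ n) y = x := by
  constructor
  · rintro ⟨⟨g, hg⟩, rfl⟩
    obtain ⟨n, rfl⟩ := Subgroup.mem_zpowers_iff.mp hg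
    exact ⟨n, rfl⟩
  · rintro ⟨n, rfl⟩
    exact ⟨⟨σ ^ n, Subgroup.zpow_mem _ (Subgroup.mem_zpowers σ) n⟩, rfl⟩

end FiniteOrbitsAux

theorem finite_orbits_of_commuting {X : Type*} (σ φ : Equiv.Perm X)
    (hcomm : σ * φ = φ * σ)
    (hfree : ∀ (x : X) (i : ℤ), 1 ≤ i → (φ ^ i) x ≠ x)
    (hfin : Finite (MulAction.orbitRel.Quotient (Subgroup.zpowers σ) X)) :
    Finite (MulAction.orbitRel.Quotient (Subgroup.zpowers φ) X) := by
  classical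
  have hC : Commute σ φ := hcomm
  set Qσ := MulAction.orbitRel.Quotient (Subgroup.zpowers σ) X with hQσ
  -- the relation for σ-orbits, concretely
  have hrel : ∀ x y : X, (MulAction.orbitRel (Subgroup.zpowers σ) X) x y ↔
      ∃ n : ℤ, (σ ^ n) y = x := by
    intro x y
    rw [MulAction.orbitRel_apply, mem_orbit_zpowers_iff']
  -- φ descends to a permutation of Qσ
  have hresp : ∀ (g : Equiv.Perm X), Commute σ g → ∀ x y : X,
      (MulAction.orbitRel (Subgroup.zpowers σ) X) x y →
      (MulAction.orbitRel (Subgroup.zpowers σ) X) (g x) (g y) := by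
    intro g hg x y h
    rw [hrel] at h ⊢
    obtain ⟨n, rfl⟩ := h
    exact ⟨n, by
      have : σ ^ n * g = g * σ ^ n := (hg.zpow_left n).eq
      calc (σ ^ n) (g y) = (σ ^ n * g) y := rfl
        _ = (g * σ ^ n) y := by rw [this]
        _ = g ((σ ^ n) y) := rfl⟩
  let Φ : Equiv.Perm Qσ :=
    { toFun := Quotient.map' φ (hresp φ hC)
      invFun := Quotient.map' ⇑(φ⁻¹) (hresp φ⁻¹ hC.inv_right)
      left_inv := by
        intro q
        induction q using Quotient.inductionOn'
        simp [Quotient.map'_mk'']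
      right_inv := by
        intro q
        induction q using Quotient.inductionOn'
        simp [Quotient.map'_mk''] }
  have hΦpow : ∀ (n : ℕ) (x : X), (Φ ^ n) (Quotient.mk'' x) = Quotient.mk'' ((φ ^ n) x) := by
    intro n
    induction n with
    | zero => intro x; simp
    | succ n ih =>
        intro x
        rw [pow_succ, pow_succ]
        have : (Φ ^ n * Φ) (Quotient.mk'' x) = (Φ ^ n) (Φ (Quotient.mk'' x)) := rfl
        rw [this]
        have hΦx : Φ (Quotient.mk'' x) = Quotient.mk'' (φ x) := rfl
        rw [hΦx, ih]
        rfl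
  -- get N ≥ 1 with Φ^N = 1
  have := Fintype.ofFinite Qσ
  obtain ⟨N, hN1, hNeq⟩ : ∃ N : ℕ, 1 ≤ N ∧ Φ ^ N = 1 := by
    refine ⟨Fintype.card (Equiv.Perm Qσ), Fintype.card_pos, pow_card_eq_one⟩
  set ψ : Equiv.Perm X := φ ^ N with hψdef
  have hCψ : Commute σ ψ := hC.pow_right N
  -- ψ preserves each σ-orbit
  have hψorb : ∀ x : X, ∃ k : ℤ, (σ ^ k) x = ψ x := by
    intro x
    have : (Φ ^ N) (Quotient.mk'' x) = Quotient.mk'' x := by rw [hNeq]; rfl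
    rw [hΦpow N x] at this
    have := Quotient.exact' this
    rw [hrel] at this
    exact this
  -- ψ is free
  have hψfree : ∀ x : X, ψ x ≠ x := by
    intro x
    have := hfree x (N : ℤ) (by exact_mod_cast hN1)
    rwa [zpow_natCast] at this
  -- concrete relation for ψ-orbits
  set Qψ := MulAction.orbitRel.Quotient (Subgroup.zpowers ψ) X with hQψ
  have hrelψ : ∀ x y : X, (MulAction.orbitRel (Subgroup.zpowers ψ) X) x y ↔
      ∃ n : ℤ, (ψ ^ n) y = x := by
    intro x y
    rw [MulAction.orbitRel_apply, mem_orbit_zpowers_iff']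
  -- mul application
  have happ : ∀ (f g : Equiv.Perm X) (x : X), (f * g) x = f (g x) := fun _ _ _ => rfl
  -- ψ⁻¹ also preserves σ-orbits
  have hψorb' : ∀ y : X, ∃ m : ℤ, (σ ^ m) y = ψ⁻¹ y := by
    intro y
    obtain ⟨k, hk⟩ := hψorb (ψ⁻¹ y)
    refine ⟨-k, ?_⟩
    have h1 : ψ (ψ⁻¹ y) = y := by simp
    rw [h1] at hk
    calc (σ ^ (-k)) y = (σ ^ (-k)) ((σ ^ k) (ψ⁻¹ y)) := by rw [hk]
      _ = (σ ^ (-k + k)) (ψ⁻¹ y) := by rw [zpow_add]; rfl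
      _ = ψ⁻¹ y := by simp
  -- every ℤ-power of ψ preserves σ-orbits
  have key : ∀ (n : ℤ) (y : X), ∃ m : ℤ, (σ ^ m) y = (ψ ^ n) y := by
    intro n
    induction n using Int.induction_on with
    | zero => intro y; exact ⟨0, by simp⟩
    | succ n ih =>
        intro y
        obtain ⟨m, hm⟩ := ih y
        obtain ⟨k, hk⟩ := hψorb ((ψ ^ (n : ℤ)) y)
        refine ⟨k + m, ?_⟩
        have h1 : (ψ ^ ((n : ℤ) + 1)) y = ψ ((ψ ^ (n : ℤ)) y) := by
          rw [add_comm, zpow_one_add]; rfl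
        rw [h1, ← hk, ← hm, zpow_add, happ]
    | pred n ih =>
        intro y
        obtain ⟨j, hj⟩ := hψorb' y
        obtain ⟨m, hm⟩ := ih (ψ⁻¹ y)
        refine ⟨m + j, ?_⟩
        have h1 : (ψ ^ (-(n : ℤ) - 1)) y = (ψ ^ (-(n : ℤ))) (ψ⁻¹ y) := by
          rw [zpow_sub_one]; rfl
        rw [h1, ← hm, ← hj, zpow_add, happ]
  -- map from ψ-orbits to σ-orbits
  let p : Qψ → Qσ := Quotient.map' id (by
    intro x y h
    rw [hrelψ] at h
    obtain ⟨n, rfl⟩ := h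
    rw [hrel]
    exact key n y)
  -- each fiber of p is finite
  have hfib : ∀ q : Qσ, Finite {c : Qψ // p c = q} := by
    intro q
    set x₀ := Quotient.out (s := MulAction.orbitRel (Subgroup.zpowers σ) X) q with hx₀def
    have hx₀ : Quotient.mk'' x₀ = q := Quotient.out_eq' q
    obtain ⟨k, hk⟩ := hψorb x₀
    have hk0 : k ≠ 0 := by
      rintro rfl
      simp only [zpow_zero, Equiv.Perm.coe_one, id_eq] at hk
      exact hψfree x₀ hk.symm
    have hK0 : 0 < (k.natAbs : ℤ) := by
      exact_mod_cast Int.natAbs_pos.mpr hk0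
    -- commuting powers applied pointwise
    have hcm : ∀ (m j : ℤ) (z : X), (ψ ^ j) ((σ ^ m) z) = (σ ^ m) ((ψ ^ j) z) := by
      intro m j z
      have h := ((hCψ.zpow_left m).zpow_right j).eq
      calc (ψ ^ j) ((σ ^ m) z) = (ψ ^ j * σ ^ m) z := rfl
        _ = (σ ^ m * ψ ^ j) z := by rw [← h]
        _ = (σ ^ m) ((ψ ^ j) z) := rfl
    have hcm1 : ∀ (m : ℤ) (z : X), ψ ((σ ^ m) z) = (σ ^ m) (ψ z) := by
      intro m z
      have := hcm m 1 z
      simpa using this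
    have hcminv : ∀ (m : ℤ) (z : X), ψ⁻¹ ((σ ^ m) z) = (σ ^ m) (ψ⁻¹ z) := by
      intro m z
      have := hcm m (-1) z
      simpa using this
    -- action of powers of ψ on the σ-orbit of x₀
    have hA : ∀ j : ℤ, (ψ ^ j) x₀ = (σ ^ (j * k)) x₀ := by
      intro j
      induction j using Int.induction_on with
      | zero => simp
      | succ j ih =>
          have h1 : (ψ ^ ((j : ℤ) + 1)) x₀ = ψ ((ψ ^ (j : ℤ)) x₀) := by
            rw [add_comm, zpow_one_add]; rfl
          have h3 : (σ ^ ((j:ℤ)*k)) ((σ ^ k) x₀) = (σ ^ ((j:ℤ)*k + k)) x₀ := by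
            rw [zpow_add]; rfl
          have h4 : (j:ℤ)*k + k = ((j:ℤ)+1)*k := by ring
          rw [h1, ih, hcm1, ← hk, h3, h4]
      | pred j ih =>
          have h1 : (ψ ^ (-(j : ℤ) - 1)) x₀ = (ψ ^ (-(j : ℤ))) (ψ⁻¹ x₀) := by
            rw [zpow_sub_one]; rfl
          have h2 : ψ⁻¹ x₀ = (σ ^ (-k)) x₀ := by
            have e1 : (σ ^ (-k)) ((σ ^ k) x₀) = x₀ := by
              have : (σ ^ (-k)) ((σ ^ k) x₀) = (σ ^ (-k + k)) x₀ := by rw [zpow_add]; rfl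
              rw [this]; simp
            have e2 := congrArg (fun z => ψ⁻¹ ((σ ^ (-k)) z)) hk
            beta_reduce at e2
            rw [e1, hcminv] at e2
            simp only [Equiv.Perm.inv_def, Equiv.symm_apply_apply] at e2
            exact e2
          have h4 : (ψ ^ (-(j:ℤ))) ((σ ^ (-k)) x₀) = (σ ^ (-k)) ((ψ ^ (-(j:ℤ))) x₀) :=
            hcm (-k) (-(j:ℤ)) x₀
          have h5 : (σ ^ (-k)) ((σ ^ (-(j:ℤ) * k)) x₀) = (σ ^ (-k + -(j:ℤ)*k)) x₀ := by
            rw [zpow_add]; rfl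
          have h6 : -k + -(j:ℤ)*k = (-(j:ℤ)-1)*k := by ring
          rw [h1, h2, h4, ih, h5, h6]
    have hB : ∀ m j : ℤ, (ψ ^ j) ((σ ^ m) x₀) = (σ ^ (m + j * k)) x₀ := by
      intro m j
      rw [hcm m j x₀, hA j]
      have : (σ ^ m) ((σ ^ (j*k)) x₀) = (σ ^ (m + j*k)) x₀ := by rw [zpow_add]; rfl
      exact this
    -- the fiber is covered by Fin k.natAbs
    have hmem : ∀ r : ℤ, p (Quotient.mk'' ((σ ^ r) x₀)) = q := by
      intro r
      have h1 : p (Quotient.mk'' ((σ ^ r) x₀)) = Quotient.mk'' ((σ ^ r) x₀) := rfl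
      rw [h1, ← hx₀]
      exact Quotient.sound' ((hrel _ _).mpr ⟨r, rfl⟩)
    let g : Fin k.natAbs → {c : Qψ // p c = q} :=
      fun r => ⟨Quotient.mk'' ((σ ^ (r : ℤ)) x₀), hmem _⟩
    have hgsur : Function.Surjective g := by
      rintro ⟨c, hc⟩
      induction c using Quotient.inductionOn' with
      | h x =>
        have hc' : Quotient.mk'' x = q := hc
        rw [← hx₀] at hc'
        obtain ⟨m, hm⟩ := (hrel x x₀).mp (Quotient.exact' hc')
        set r : ℤ := m % (k.natAbs : ℤ) with hrdef
        have hr0 : 0 ≤ r := Int.emod_nonneg m (by exact_mod_cast hK0.ne')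
        have hrK : r < (k.natAbs : ℤ) := Int.emod_lt_of_pos m hK0
        have hdvd : k ∣ m - r := by
          have h1 : (k.natAbs : ℤ) ∣ m - r := Int.dvd_self_sub_of_emod_eq rfl
          exact (Int.natAbs_dvd).mp h1
        obtain ⟨j, hj⟩ := hdvd
        refine ⟨⟨r.toNat, by omega⟩, ?_⟩
        apply Subtype.ext
        have hcast : ((⟨r.toNat, by omega⟩ : Fin k.natAbs) : ℤ) = r := by
          simp [Int.toNat_of_nonneg hr0]
        show Quotient.mk'' ((σ ^ ((⟨r.toNat, by omega⟩ : Fin k.natAbs) : ℤ)) x₀)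
            = Quotient.mk'' x
        rw [hcast]
        refine (Quotient.sound' ((hrelψ x _).mpr ⟨j, ?_⟩)).symm
        have hexp : r + j * k = m := by linear_combination -hj
        rw [hB r j, hexp, hm]
    exact Finite.of_surjective g hgsur
  haveI := hfib
  have hQψfin : Finite Qψ := Finite.of_equiv _ (Equiv.sigmaFiberEquiv p)
  -- finally, ψ-orbits refine φ-orbits
  let pr : Qψ → MulAction.orbitRel.Quotient (Subgroup.zpowers φ) X := Quotient.map' id (by
    intro x y h
    rw [hrelψ] at h
    obtain ⟨n, rfl⟩ := h
    rw [MulAction.orbitRel_apply, mem_orbit_zpowers_iff']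
    refine ⟨(N : ℤ) * n, ?_⟩
    rw [zpow_mul, zpow_natCast]
    rfl)
  have hprsur : Function.Surjective pr := by
    intro c
    induction c using Quotient.inductionOn' with
    | h x => exact ⟨Quotient.mk'' x, rfl⟩
  exact Finite.of_surjective pr hprsur
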